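/- For k ≥ 2 and real c > 0, Σ_{y k-free} η(y)^{−kc−1} = Π_p (1 + (k−1)/p^{kc+1}), and this quantity is O(c^{−(k−1)} + 1) as c varies over (0,1]. -/

import Mathlib

/-- The radical of a positive integer: the product of its distinct prime divisors. -/
def radical (n : ℕ) : ℕ := ∏ p ∈ n.primeFactors, p

open scoped Classical

/-- The sum `Σ_{y k-free} η(y)^{-kc-1}`. -/
noncomputable def F (k : ℕ) (c : ℝ) : ℝ :=
  ∑' y : ℕ,
    if 0 < y ∧ ∀ p : ℕ, p.Prime → ¬ p ^ k ∣ y then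
      ((radical y : ℕ) : ℝ) ^ (-(k * c) - 1) else 0

section Aux

open Real Finset

/-- The summand. -/
noncomputable def gg (k : ℕ) (c : ℝ) (y : ℕ) : ℝ :=
  if 0 < y ∧ ∀ p : ℕ, p.Prime → ¬ p ^ k ∣ y then
    ((radical y : ℕ) : ℝ) ^ (-(k * c) - 1) else 0

lemma F_eq (k : ℕ) (c : ℝ) : F k c = ∑' y : ℕ, gg k c y := rfl

lemma radical_one : radical 1 = 1 := by simp [radical]

lemma radical_mul {m n : ℕ} (hm : m ≠ 0) (hn : n ≠ 0) (h : Nat.Coprime m n) :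
    radical (m * n) = radical m * radical n := by
  unfold radical
  rw [Nat.primeFactors_mul hm hn, Finset.prod_union h.disjoint_primeFactors]

lemma radical_prime_pow {p : ℕ} (hp : p.Prime) {e : ℕ} (he : e ≠ 0) :
    radical (p ^ e) = p := by
  unfold radical
  rw [Nat.primeFactors_pow _ he, hp.primeFactors, Finset.prod_singleton]

lemma gg_nonneg (k : ℕ) (c : ℝ) (y : ℕ) : 0 ≤ gg k c y := by
  unfold gg
  split_ifs
  · exact Real.rpow_nonneg (Nat.cast_nonneg _) _
  · exact le_rfl

lemma gg_zero (k : ℕ) (c : ℝ) : gg k c 0 = 0 := by simp [gg]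

lemma gg_one (k : ℕ) (c : ℝ) (hk : k ≠ 0) : gg k c 1 = 1 := by
  have h : (0 < 1 ∧ ∀ p : ℕ, p.Prime → ¬ p ^ k ∣ 1) := by
    refine ⟨one_pos, fun p hp hd => ?_⟩
    have h1 : p ^ k = 1 := Nat.dvd_one.mp hd
    rcases (pow_eq_one_iff.mp h1).resolve_right hk with rfl
    exact hp.one_lt.ne' rfl
  rw [gg, if_pos h, radical_one]
  simp

lemma gg_mul (k : ℕ) (c : ℝ) (hk : k ≠ 0) {m n : ℕ} (h : Nat.Coprime m n) :
    gg k c (m * n) = gg k c m * gg k c n := by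
  rcases eq_or_ne m 0 with rfl | hm
  · simp [gg_zero]
  rcases eq_or_ne n 0 with rfl | hn
  · simp [gg_zero]
  have hmn : m * n ≠ 0 := Nat.mul_ne_zero hm hn
  by_cases hfree : (∀ p : ℕ, p.Prime → ¬ p ^ k ∣ m) ∧ (∀ p : ℕ, p.Prime → ¬ p ^ k ∣ n)
  · have hcond : 0 < m * n ∧ ∀ p : ℕ, p.Prime → ¬ p ^ k ∣ m * n := by
      refine ⟨Nat.pos_of_ne_zero hmn, fun p hp hd => ?_⟩
      have hpd : p ∣ m * n := (dvd_pow_self p hk).trans hd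
      rcases hp.dvd_mul.mp hpd with hpm | hpn
      · have hcop : Nat.Coprime (p ^ k) n :=
          ((Nat.Coprime.coprime_dvd_left hpm h)).pow_left _
        exact hfree.1 p hp (hcop.dvd_of_dvd_mul_right hd)
      · have hcop : Nat.Coprime (p ^ k) m :=
          ((Nat.Coprime.coprime_dvd_left hpn h.symm)).pow_left _
        exact hfree.2 p hp (hcop.dvd_of_dvd_mul_right (by rwa [mul_comm] at hd))
    rw [gg, if_pos hcond, gg, if_pos ⟨Nat.pos_of_ne_zero hm, hfree.1⟩,
      gg, if_pos ⟨Nat.pos_of_ne_zero hn, hfree.2⟩, radical_mul hm hn h]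
    push_cast
    rw [Real.mul_rpow (Nat.cast_nonneg _) (Nat.cast_nonneg _)]
  · have hcond : ¬ (0 < m * n ∧ ∀ p : ℕ, p.Prime → ¬ p ^ k ∣ m * n) := by
      rintro ⟨-, hall⟩
      exact hfree ⟨fun p hp hd => hall p hp (hd.trans (dvd_mul_right m n)),
        fun p hp hd => hall p hp (hd.trans (dvd_mul_left n m))⟩
    rw [gg, if_neg hcond]
    rcases not_and_or.mp hfree with hf | hf
    · rw [gg, if_neg (fun hc => hf hc.2), zero_mul]
    · rw [show gg k c n = if 0 < n ∧ ∀ p : ℕ, p.Prime → ¬ p ^ k ∣ n then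
        ((radical n : ℕ) : ℝ) ^ (-(k * c) - 1) else 0 from rfl,
        if_neg (fun hc => hf hc.2), mul_zero]

lemma gg_prime_pow_of_lt {k : ℕ} (hk : 2 ≤ k) (c : ℝ) {p : ℕ} (hp : p.Prime)
    {e : ℕ} (he : e ≠ 0) (hek : e < k) :
    gg k c (p ^ e) = (p : ℝ) ^ (-(k * c) - 1) := by
  have hcond : 0 < p ^ e ∧ ∀ q : ℕ, q.Prime → ¬ q ^ k ∣ p ^ e := by
    refine ⟨pow_pos hp.pos e, fun q hq hd => ?_⟩
    have hqp : q ∣ p ^ e := (dvd_pow_self q (by omega)).trans hd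
    have hq_eq : q = p := (Nat.prime_dvd_prime_iff_eq hq hp).mp (hq.dvd_of_dvd_pow hqp)
    subst hq_eq
    have := (Nat.pow_dvd_pow_iff_le_right hp.one_lt).mp hd
    omega
  rw [gg, if_pos hcond, radical_prime_pow hp he]

lemma gg_prime_pow_of_ge {k : ℕ} (c : ℝ) {p : ℕ} (hp : p.Prime)
    {e : ℕ} (hek : k ≤ e) :
    gg k c (p ^ e) = 0 := by
  rw [gg, if_neg]
  rintro ⟨-, hall⟩
  exact hall p hp (pow_dvd_pow p hek)

lemma gg_hasSum_local {k : ℕ} (hk : 2 ≤ k) (c : ℝ) {p : ℕ} (hp : p.Prime) :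
    HasSum (fun e : ℕ => gg k c (p ^ e))
      (1 + ((k : ℝ) - 1) * (p : ℝ) ^ (-(k * c) - 1)) := by
  have hzero : ∀ e ∉ Finset.range k, gg k c (p ^ e) = 0 := fun e he =>
    gg_prime_pow_of_ge c hp (by simpa using he)
  have hsum : HasSum (fun e : ℕ => gg k c (p ^ e)) (∑ e ∈ Finset.range k, gg k c (p ^ e)) :=
    hasSum_sum_of_ne_finset_zero hzero
  have hval : ∑ e ∈ Finset.range k, gg k c (p ^ e)
      = 1 + ((k : ℝ) - 1) * (p : ℝ) ^ (-(k * c) - 1) := by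
    obtain ⟨k', rfl⟩ : ∃ k', k = k' + 1 := ⟨k - 1, by omega⟩
    rw [Finset.sum_range_succ']
    have h0 : gg (k' + 1) c (p ^ 0) = 1 := by
      rw [pow_zero]; exact gg_one _ c (by omega)
    rw [h0]
    have hterm : ∀ i ∈ Finset.range k', gg (k' + 1) c (p ^ (i + 1))
        = (p : ℝ) ^ (-((k' + 1 : ℕ) * c) - 1) := by
      intro i hi
      exact gg_prime_pow_of_lt hk c hp (by omega) (by simpa using Finset.mem_range.mp hi)
    rw [Finset.sum_congr rfl hterm, Finset.sum_const, Finset.card_range, nsmul_eq_mul]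
    push_cast
    ring
  rwa [hval] at hsum

lemma gg_summable_norm_local {k : ℕ} (hk : 2 ≤ k) (c : ℝ) {p : ℕ} (hp : p.Prime) :
    Summable fun e : ℕ => ‖gg k c (p ^ e)‖ := by
  refine ((gg_hasSum_local hk c hp).summable).congr fun e => ?_
  exact (Real.norm_of_nonneg (gg_nonneg _ _ _)).symm

/-- Key elementary estimate: for `0 < r ≤ 1` and `n : ℕ`,
`(n+2)^(-(1+r)) ≤ (1/r) * ((n+1)^(-r) - (n+2)^(-r))`. -/
lemma telescope_step {r : ℝ} (hr0 : 0 < r) (hr1 : r ≤ 1) (n : ℕ) :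
    ((n : ℝ) + 2) ^ (-(1 + r)) ≤ (1 / r) * (((n : ℝ) + 1) ^ (-r) - ((n : ℝ) + 2) ^ (-r)) := by
  set a : ℝ := (n : ℝ) + 1 with ha
  have ha0 : (0 : ℝ) < a := by positivity
  have hb0 : (0 : ℝ) < a + 1 := by positivity
  have h2 : (n : ℝ) + 2 = a + 1 := by rw [ha]; ring
  have hApos : 0 < a ^ (-r) := Real.rpow_pos_of_pos ha0 _
  have hBpos : 0 < (a + 1) ^ (-r) := Real.rpow_pos_of_pos hb0 _
  set A := a ^ (-r) with hA
  set B := (a + 1) ^ (-r) with hB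
  have hu0 : 0 < (a + 1)⁻¹ := inv_pos.mpr hb0
  set u := (a + 1)⁻¹ with hu
  -- Bernoulli
  have hbern : (1 + (-u)) ^ r ≤ 1 + r * (-u) := by
    refine rpow_one_add_le_one_add_mul_self ?_ hr0.le hr1
    have h1 : u ≤ 1 := by
      rw [hu]
      exact inv_le_one_of_one_le₀ (by linarith)
    linarith
  have hid : 1 + (-u) = a / (a + 1) := by
    rw [hu]; field_simp; ring
  have hsplit : (a / (a + 1)) ^ r = a ^ r * B := by
    rw [hB, Real.div_rpow ha0.le hb0.le, Real.rpow_neg hb0.le, div_eq_mul_inv]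
  rw [hid, hsplit] at hbern
  have hmul := mul_le_mul_of_nonneg_left hbern hApos.le
  have hAA : A * (a ^ r * B) = B := by
    rw [← mul_assoc, hA, ← Real.rpow_add ha0]
    simp
  rw [hAA] at hmul
  -- hmul : B ≤ A * (1 + r * (-u))
  have h1 : B ≤ A := by
    rw [hA, hB]
    exact Real.rpow_le_rpow_of_nonpos ha0 (by linarith) (by linarith)
  have key : r * (B * u) ≤ A - B := by
    nlinarith [mul_le_mul_of_nonneg_left h1 (by positivity : (0 : ℝ) ≤ r * u)]
  have hrew : ((n : ℝ) + 2) ^ (-(1 + r)) = B * u := by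
    rw [h2, show -(1 + r) = -r + (-1) by ring, Real.rpow_add hb0, hB, hu,
      Real.rpow_neg_one]
  rw [hrew, h2]
  calc B * u = (1 / r) * (r * (B * u)) := by field_simp
    _ ≤ (1 / r) * (A - B) := by
        exact mul_le_mul_of_nonneg_left key (by positivity)

lemma tail_bound {r : ℝ} (hr0 : 0 < r) (hr1 : r ≤ 1) :
    Summable (fun n : ℕ => ((n : ℝ) + 2) ^ (-(1 + r))) ∧
      ∑' n : ℕ, ((n : ℝ) + 2) ^ (-(1 + r)) ≤ 1 / r := by
  have hb : ∀ N : ℕ, ∑ i ∈ Finset.range N, ((i : ℝ) + 2) ^ (-(1 + r)) ≤ 1 / r := by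
    intro N
    calc ∑ i ∈ Finset.range N, ((i : ℝ) + 2) ^ (-(1 + r))
        ≤ ∑ i ∈ Finset.range N, (1 / r) * (((i : ℝ) + 1) ^ (-r) - ((i : ℝ) + 2) ^ (-r)) :=
          Finset.sum_le_sum fun i _ => telescope_step hr0 hr1 i
      _ = (1 / r) * ∑ i ∈ Finset.range N,
            ((fun j : ℕ => ((j : ℝ) + 1) ^ (-r)) i - (fun j : ℕ => ((j : ℝ) + 1) ^ (-r)) (i + 1)) := by
          rw [← Finset.mul_sum]
          congr 1
          refine Finset.sum_congr rfl fun i _ => ?_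
          push_cast
          ring_nf
      _ = (1 / r) * (((0 : ℝ) + 1) ^ (-r) - ((N : ℝ) + 1) ^ (-r)) := by
          rw [Finset.sum_range_sub' (f := fun j : ℕ => ((j : ℝ) + 1) ^ (-r))]
          norm_num
      _ ≤ 1 / r := by
          have h1 : ((0 : ℝ) + 1) ^ (-r) = 1 := by norm_num
          have hNn : (0 : ℝ) ≤ ((N : ℝ) + 1) ^ (-r) := Real.rpow_nonneg (by positivity) _
          have hr' : (0 : ℝ) ≤ 1 / r := by positivity
          rw [h1]
          nlinarith
  have hnn : ∀ n : ℕ, 0 ≤ ((n : ℝ) + 2) ^ (-(1 + r)) :=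
    fun n => Real.rpow_nonneg (by positivity) _
  exact ⟨summable_of_sum_range_le hnn hb, Real.tsum_le_of_sum_range_le hnn hb⟩

lemma zeta_summable {t : ℝ} (ht : 0 < t) :
    Summable (fun n : ℕ => (n : ℝ) ^ (-(t + 1))) :=
  Real.summable_nat_rpow.mpr (by linarith)

lemma zeta_bound {t : ℝ} (ht : 0 < t) :
    ∑' n : ℕ, (n : ℝ) ^ (-(t + 1)) ≤ 2 + 1 / t := by
  set r : ℝ := min t 1 with hr
  have hr0 : 0 < r := lt_min ht one_pos
  have hr1 : r ≤ 1 := min_le_right _ _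
  have hsum := zeta_summable ht
  rw [Summable.tsum_eq_zero_add hsum, Summable.tsum_eq_zero_add ((summable_nat_add_iff 1).mpr hsum)]
  have e0 : ((0 : ℕ) : ℝ) ^ (-(t + 1)) = 0 := by
    rw [Nat.cast_zero, Real.zero_rpow (by linarith)]
  have e1 : (((0 : ℕ) + 1 : ℕ) : ℝ) ^ (-(t + 1)) = 1 := by norm_num
  rw [e0, e1]
  have htail : ∑' n : ℕ, (((n + 1 + 1 : ℕ)) : ℝ) ^ (-(t + 1)) ≤ 1 / r := by
    have hle : ∀ n : ℕ, (((n + 1 + 1 : ℕ)) : ℝ) ^ (-(t + 1)) ≤ ((n : ℝ) + 2) ^ (-(1 + r)) := by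
      intro n
      have hcast : (((n + 1 + 1 : ℕ)) : ℝ) = (n : ℝ) + 2 := by push_cast; ring
      rw [hcast]
      refine Real.rpow_le_rpow_of_exponent_le (by linarith [Nat.cast_nonneg (α := ℝ) n]) ?_
      have : r ≤ t := min_le_left _ _
      linarith
    calc ∑' n : ℕ, (((n + 1 + 1 : ℕ)) : ℝ) ^ (-(t + 1))
        ≤ ∑' n : ℕ, ((n : ℝ) + 2) ^ (-(1 + r)) := by
          refine Summable.tsum_le_tsum hle ?_ (tail_bound hr0 hr1).1
          exact (summable_nat_add_iff 2).mpr hsum |>.congr fun n => by push_cast; ring_nf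
      _ ≤ 1 / r := (tail_bound hr0 hr1).2
  have hrt : 1 / r ≤ 1 + 1 / t := by
    rcases min_cases t 1 with ⟨h1, h2⟩ | ⟨h1, h2⟩
    · rw [hr, h1]
      have : (0 : ℝ) < 1 / t := by positivity
      linarith
    · rw [hr, h1]
      norm_num
      positivity
  linarith

/-- The zeta-like majorant. -/
noncomputable def Zb (t : ℝ) : ℝ := ∑' n : ℕ, (n : ℝ) ^ (-(t + 1))

lemma Zb_nonneg (t : ℝ) : 0 ≤ Zb t :=
  tsum_nonneg fun n => Real.rpow_nonneg (Nat.cast_nonneg _) _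

/-- Finite products over primes of `1 + p^(-(t+1))` are bounded by `Zb t`. -/
lemma prod_one_add_le_Zb {t : ℝ} (ht : 0 < t) (P : Finset ℕ) (hP : ∀ p ∈ P, p.Prime) :
    ∏ p ∈ P, (1 + (p : ℝ) ^ (-(t + 1))) ≤ Zb t := by
  have hexp : ∏ p ∈ P, ((p : ℝ) ^ (-(t + 1)) + 1)
      = ∑ s ∈ P.powerset, ((∏ p ∈ s, p : ℕ) : ℝ) ^ (-(t + 1)) := by
    rw [Finset.prod_add]
    refine Finset.sum_congr rfl fun s hs => ?_
    rw [Finset.prod_const_one, mul_one, Real.finset_prod_rpow s _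
      (fun i _ => Nat.cast_nonneg i) _, Nat.cast_prod]
  have hinj : ∀ s₁ ∈ P.powerset, ∀ s₂ ∈ P.powerset,
      (∏ p ∈ s₁, p) = (∏ p ∈ s₂, p) → s₁ = s₂ := by
    intro s₁ hs₁ s₂ hs₂ hprod
    have h₁ : Nat.primeFactors (∏ p ∈ s₁, p) = s₁ :=
      Nat.primeFactors_prod fun p hp => hP p (Finset.mem_powerset.mp hs₁ hp)
    have h₂ : Nat.primeFactors (∏ p ∈ s₂, p) = s₂ :=
      Nat.primeFactors_prod fun p hp => hP p (Finset.mem_powerset.mp hs₂ hp)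
    rw [← h₁, ← h₂, hprod]
  calc ∏ p ∈ P, (1 + (p : ℝ) ^ (-(t + 1)))
      = ∏ p ∈ P, ((p : ℝ) ^ (-(t + 1)) + 1) := by
        refine Finset.prod_congr rfl fun p _ => by ring
    _ = ∑ s ∈ P.powerset, ((∏ p ∈ s, p : ℕ) : ℝ) ^ (-(t + 1)) := hexp
    _ = ∑ m ∈ P.powerset.image (fun s => ∏ p ∈ s, p), (m : ℝ) ^ (-(t + 1)) := by
        rw [Finset.sum_image hinj]
    _ ≤ Zb t := by
        refine Summable.sum_le_tsum _ (fun m _ => Real.rpow_nonneg (Nat.cast_nonneg _) _) ?_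
        exact zeta_summable ht

/-- Summability of `gg` together with the bound by `Zb ^ (k-1)`. -/
lemma gg_summable_and_bound {k : ℕ} (hk : 2 ≤ k) {c : ℝ} (hc : 0 < c) :
    Summable (gg k c) ∧ ∑' y : ℕ, gg k c y ≤ (Zb ((k : ℝ) * c)) ^ (k - 1) := by
  set t : ℝ := (k : ℝ) * c with htdef
  have ht : 0 < t := by
    have : (0 : ℝ) < (k : ℝ) := by positivity
    positivity
  have hexp : -((k : ℝ) * c) - 1 = -(t + 1) := by rw [htdef]; ring
  have hbound : ∀ N : ℕ, ∑ i ∈ Finset.range N, gg k c i ≤ (Zb t) ^ (k - 1) := by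
    intro N
    obtain ⟨hsummable, hhassum⟩ :=
      EulerProduct.summable_and_hasSum_smoothNumbers_prod_primesBelow_tsum
        (f := gg k c) (gg_one k c (by omega)) (fun {m n} h => gg_mul k c (by omega) h)
        (fun {p} hp => gg_summable_norm_local hk c hp) N
    -- partial sum ≤ tsum over smooth numbers
    have hind : Summable (Set.indicator (N.smoothNumbers) (gg k c)) :=
      summable_subtype_iff_indicator.mp hhassum.summable
    have hindval : ∑' n : ℕ, Set.indicator (N.smoothNumbers) (gg k c) n
        = ∏ p ∈ N.primesBelow, ∑' e : ℕ, gg k c (p ^ e) := by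
      rw [← _root_.tsum_subtype]
      exact hhassum.tsum_eq
    have hstep1 : ∑ i ∈ Finset.range N, gg k c i
        ≤ ∏ p ∈ N.primesBelow, ∑' e : ℕ, gg k c (p ^ e) := by
      have heq : ∑ i ∈ Finset.range N, gg k c i
          = ∑ i ∈ Finset.range N, Set.indicator (N.smoothNumbers) (gg k c) i := by
        refine Finset.sum_congr rfl fun i hi => ?_
        by_cases hmem : i ∈ N.smoothNumbers
        · rw [Set.indicator_of_mem hmem]
        · rw [Set.indicator_of_notMem hmem]
          rcases eq_or_ne i 0 with rfl | hi0
          · exact gg_zero k c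
          · exfalso
            apply hmem
            rw [Nat.mem_smoothNumbers']
            intro p hp hpd
            have hple : p ≤ i := Nat.le_of_dvd (Nat.pos_of_ne_zero hi0) hpd
            have : i < N := Finset.mem_range.mp hi
            omega
      rw [heq, ← hindval]
      exact Summable.sum_le_tsum _ (fun i _ => Set.indicator_nonneg (fun j _ => gg_nonneg k c j) i) hind
    -- bound the product
    have hloc : ∀ p ∈ N.primesBelow, (∑' e : ℕ, gg k c (p ^ e))
        = 1 + ((k : ℝ) - 1) * (p : ℝ) ^ (-(t + 1)) := by
      intro p hp
      rw [← hexp]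
      exact (gg_hasSum_local hk c (Nat.prime_of_mem_primesBelow hp)).tsum_eq
    have hfac : ∀ p ∈ N.primesBelow, 1 + ((k : ℝ) - 1) * (p : ℝ) ^ (-(t + 1))
        ≤ (1 + (p : ℝ) ^ (-(t + 1))) ^ (k - 1) := by
      intro p hp
      have hv : (0 : ℝ) ≤ (p : ℝ) ^ (-(t + 1)) := Real.rpow_nonneg (Nat.cast_nonneg _) _
      have hcast : ((k : ℝ) - 1) = ((k - 1 : ℕ) : ℝ) := by
        have : (1 : ℕ) ≤ k := by omega
        push_cast [Nat.cast_sub this]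
        ring
      rw [hcast]
      exact one_add_mul_le_pow (by linarith) (k - 1)
    have hstep2 : ∏ p ∈ N.primesBelow, (∑' e : ℕ, gg k c (p ^ e)) ≤ (Zb t) ^ (k - 1) := by
      rw [Finset.prod_congr rfl hloc]
      calc ∏ p ∈ N.primesBelow, (1 + ((k : ℝ) - 1) * (p : ℝ) ^ (-(t + 1)))
          ≤ ∏ p ∈ N.primesBelow, (1 + (p : ℝ) ^ (-(t + 1))) ^ (k - 1) := by
            refine Finset.prod_le_prod (fun p _ => ?_) hfac
            have hv : (0 : ℝ) ≤ (p : ℝ) ^ (-(t + 1)) := Real.rpow_nonneg (Nat.cast_nonneg _) _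
            have hk1 : (0 : ℝ) ≤ (k : ℝ) - 1 := by
              have : (2 : ℝ) ≤ (k : ℝ) := by exact_mod_cast hk
              linarith
            positivity
        _ = (∏ p ∈ N.primesBelow, (1 + (p : ℝ) ^ (-(t + 1)))) ^ (k - 1) := by
            rw [Finset.prod_pow]
        _ ≤ (Zb t) ^ (k - 1) := by
            refine pow_le_pow_left₀ ?_ ?_ _
            · exact Finset.prod_nonneg fun p _ => by
                have : (0 : ℝ) ≤ (p : ℝ) ^ (-(t + 1)) := Real.rpow_nonneg (Nat.cast_nonneg _) _
                linarith
            · exact prod_one_add_le_Zb ht _ (fun p hp => Nat.prime_of_mem_primesBelow hp)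
    exact hstep1.trans hstep2
  exact ⟨summable_of_sum_range_le (gg_nonneg k c) hbound,
    Real.tsum_le_of_sum_range_le (gg_nonneg k c) hbound⟩

end Aux

theorem kfree_radical_sum (k : ℕ) (hk : 2 ≤ k) :
    (∀ c : ℝ, 0 < c → c ≤ 1 →
      HasProd (fun p : Nat.Primes =>
        1 + ((k : ℝ) - 1) / ((p : ℕ) : ℝ) ^ ((k : ℝ) * c + 1)) (F k c)) ∧
    ∃ C : ℝ, 0 < C ∧ ∀ c : ℝ, 0 < c → c ≤ 1 →
      F k c ≤ C * (c ^ (-((k : ℝ) - 1)) + 1) := by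
  constructor
  · intro c hc _
    have hsummable : Summable (gg k c) := (gg_summable_and_bound hk hc).1
    have hsum_norm : Summable fun n : ℕ => ‖gg k c n‖ :=
      hsummable.congr fun n => (Real.norm_of_nonneg (gg_nonneg _ _ _)).symm
    have hP := EulerProduct.eulerProduct_hasProd (f := gg k c)
      (gg_one k c (by omega)) (fun {m n} h => gg_mul k c (by omega) h)
      hsum_norm (gg_zero k c)
    have hfun : (fun p : Nat.Primes => ∑' e : ℕ, gg k c ((p : ℕ) ^ e))
        = fun p : Nat.Primes => 1 + ((k : ℝ) - 1) / ((p : ℕ) : ℝ) ^ ((k : ℝ) * c + 1) := by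
      funext p
      rw [(gg_hasSum_local hk c p.prop).tsum_eq]
      congr 1
      rw [div_eq_mul_inv, ← Real.rpow_neg (Nat.cast_nonneg _)]
      congr 1
      ring
    rw [F_eq]
    exact hfun ▸ hP
  · refine ⟨(5 / 2 : ℝ) ^ (k - 1), by positivity, fun c hc hc1 => ?_⟩
    have hkc : (0 : ℝ) < (k : ℝ) * c := by positivity
    have hk2 : (2 : ℝ) ≤ (k : ℝ) := by exact_mod_cast hk
    have hF : F k c ≤ (Zb ((k : ℝ) * c)) ^ (k - 1) := by
      rw [F_eq]; exact (gg_summable_and_bound hk hc).2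
    have hZ : Zb ((k : ℝ) * c) ≤ 5 / (2 * c) := by
      have h1 : Zb ((k : ℝ) * c) ≤ 2 + 1 / ((k : ℝ) * c) := zeta_bound hkc
      have h2 : 1 / ((k : ℝ) * c) ≤ 1 / (2 * c) := by
        apply one_div_le_one_div_of_le (by positivity)
        nlinarith
      have h3 : (2 : ℝ) ≤ 2 / c := by
        rw [le_div_iff₀ hc]; linarith
      have h4 : 2 / c + 1 / (2 * c) = 5 / (2 * c) := by
        field_simp
        ring
      linarith
    have hpow : (Zb ((k : ℝ) * c)) ^ (k - 1) ≤ (5 / (2 * c)) ^ (k - 1) :=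
      pow_le_pow_left₀ (Zb_nonneg _) hZ _
    have hsplit : ((5 : ℝ) / (2 * c)) ^ (k - 1) = (5 / 2) ^ (k - 1) * (1 / c) ^ (k - 1) := by
      rw [← mul_pow]
      congr 1
      field_simp
    have hrpow : (1 / c) ^ (k - 1) = c ^ (-((k : ℝ) - 1)) := by
      have hcast : -((k : ℝ) - 1) = -(((k - 1 : ℕ) : ℝ)) := by
        rw [Nat.cast_sub (by omega : 1 ≤ k)]
        push_cast
        ring
      rw [hcast, Real.rpow_neg hc.le, Real.rpow_natCast, ← inv_pow, one_div]
    have hfinal : F k c ≤ (5 / 2 : ℝ) ^ (k - 1) * c ^ (-((k : ℝ) - 1)) := by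
      calc F k c ≤ _ := hF
        _ ≤ _ := hpow
        _ = _ := by rw [hsplit, hrpow]
    have hx : (0 : ℝ) ≤ c ^ (-((k : ℝ) - 1)) := Real.rpow_nonneg hc.le _
    nlinarith [pow_pos (by norm_num : (0:ℝ) < 5/2) (k-1)]
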